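/- Let G be a connected finite simple undirected graph with at least two vertices and let S be a perfect critical set of G with |S| = k. Then for every vertex v ∉ S, |N_S(v)| ≠ 1 and |N_S(v)| ≠ k − 1. -/

import Mathlib

open Matrix
open scoped Classical

/-- `S` is a critical set of `G`: `S` is nonempty and there is a nonzero eigenvector of the
Laplacian of `G` vanishing outside `S`. -/
def IsCriticalSet {V : Type*} [Fintype V] [DecidableEq V] (G : SimpleGraph V) (S : Set V) :
    Prop :=
  S.Nonempty ∧ ∃ (lam : ℝ) (y : V → ℝ), y ≠ 0 ∧
    G.lapMatrix ℝ *ᵥ y = lam • y ∧ ∀ v ∉ S, y v = 0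

/-- `S` is a perfect critical set of `G`: some inducing eigenvector vanishes outside `S` and is
nonzero at every vertex of `S`. -/
def IsPerfectCriticalSet {V : Type*} [Fintype V] [DecidableEq V] (G : SimpleGraph V)
    (S : Set V) : Prop :=
  S.Nonempty ∧ ∃ (lam : ℝ) (y : V → ℝ), y ≠ 0 ∧
    G.lapMatrix ℝ *ᵥ y = lam • y ∧ (∀ v ∉ S, y v = 0) ∧ ∀ v ∈ S, y v ≠ 0

/-- `S` is a minimal perfect critical set of `G`: a perfect critical set none of whose proper
subsets is a perfect critical set. -/
def IsMinimalPerfectCriticalSet {V : Type*} [Fintype V] [DecidableEq V] (G : SimpleGraph V)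
    (S : Set V) : Prop :=
  IsPerfectCriticalSet G S ∧ ∀ T : Set V, T ⊂ S → ¬ IsPerfectCriticalSet G T

/-- Lemma 1: if `S` is a perfect critical set with `|S| = k`, then no vertex outside `S` has
exactly `1` or exactly `k - 1` neighbors in `S`. -/
theorem pcs_neighbor_count_ne_one_and_ne_pred {V : Type*} [Fintype V] [DecidableEq V]
    (G : SimpleGraph V) (hG : G.Connected) (hcard : 2 ≤ Fintype.card V)
    (S : Set V) (k : ℕ) (hk : S.ncard = k) (hS : IsPerfectCriticalSet G S) :
    ∀ v ∉ S, {u ∈ S | G.Adj v u}.ncard ≠ 1 ∧ {u ∈ S | G.Adj v u}.ncard ≠ k - 1 := by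
  classical
  obtain ⟨hSne, lam, y, hy0, heig, hvan, hnz⟩ := hS
  intro v hv
  have hyv : y v = 0 := hvan v hv
  -- lam ≠ 0
  have hlam : lam ≠ 0 := by
    intro h
    subst h
    have hz : G.lapMatrix ℝ *ᵥ y = 0 := by simpa using heig
    have hconst : ∀ i j, G.Reachable i j → y i = y j := by
      rw [← SimpleGraph.lapMatrix_mulVec_eq_zero_iff_forall_reachable]
      simpa [Matrix.toLin'_apply] using hz
    obtain ⟨s, hs⟩ := hSne
    have : y s = y v := hconst s v (hG.preconnected s v)
    exact hnz s hs (this.trans hyv)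
  -- total sum of y is zero
  have hsumV : ∑ u, y u = 0 := by
    have h1 : lam * ∑ u, y u = ∑ u, (G.lapMatrix ℝ *ᵥ y) u := by
      rw [heig]
      simp [Finset.mul_sum]
    have h2 : ∑ u, (G.lapMatrix ℝ *ᵥ y) u = 0 := by
      have : ∑ u, (G.lapMatrix ℝ *ᵥ y) u = ∑ w, (∑ u, G.lapMatrix ℝ u w) * y w := by
        simp only [Matrix.mulVec, dotProduct, Finset.sum_mul]
        rw [Finset.sum_comm]
      rw [this]
      have hcol : ∀ w, ∑ u, G.lapMatrix ℝ u w = 0 := by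
        intro w
        have hsym := (SimpleGraph.isSymm_lapMatrix G (R := ℝ))
        have : ∑ u, G.lapMatrix ℝ u w = ∑ u, G.lapMatrix ℝ w u := by
          refine Finset.sum_congr rfl fun u _ => ?_
          rw [← hsym.apply u w]
        rw [this]
        have := congrFun (SimpleGraph.lapMatrix_mulVec_const_eq_zero (R := ℝ) G) w
        simpa [Matrix.mulVec, dotProduct] using this
      simp [hcol]
    have := h1.trans h2
    exact (mul_eq_zero.mp this).resolve_left hlam
  -- sum over S is zero
  have hsumS : ∑ u ∈ S.toFinset, y u = 0 := by
    rw [← hsumV]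
    exact Finset.sum_subset (Finset.subset_univ _) (fun x _ hx => hvan x (by simpa using hx))
  -- sum over neighbors in S is zero
  set N : Finset V := S.toFinset.filter (fun u => G.Adj v u) with hN
  have hNsum : ∑ u ∈ N, y u = 0 := by
    have hv0 : (G.lapMatrix ℝ *ᵥ y) v = 0 := by
      rw [heig]; simp [hyv]
    rw [SimpleGraph.lapMatrix_mulVec_apply, hyv, mul_zero, zero_sub, neg_eq_zero] at hv0
    rw [← hv0]
    apply Finset.sum_subset
    · intro u hu
      simp only [hN, Finset.mem_filter] at hu
      simpa using hu.2
    · intro x hx hx2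
      apply hvan
      intro hxS
      exact hx2 (by simp [hN, hxS, (G.mem_neighborFinset v x).mp hx])
  have hset : {u ∈ S | G.Adj v u} = ↑N := by
    ext u; simp [hN]
  rw [hset, Set.ncard_coe_finset]
  have hNS : N ⊆ S.toFinset := Finset.filter_subset _ _
  have hScard : S.toFinset.card = k := by
    rw [← hk, Set.ncard_eq_toFinset_card']
  have hk1 : 1 ≤ k := by
    rw [← hScard]
    obtain ⟨s, hs⟩ := hSne
    exact Finset.card_pos.mpr ⟨s, by simpa using hs⟩
  constructor
  · intro h1
    obtain ⟨u, hu⟩ := Finset.card_eq_one.mp h1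
    have huS : u ∈ S := by
      have hm : u ∈ N := by simp [hu]
      exact Set.mem_toFinset.mp (Finset.mem_filter.mp hm).1
    have : y u = 0 := by simpa [hu] using hNsum
    exact hnz u huS this
  · intro h2
    have hdiff : (S.toFinset \ N).card = 1 := by
      rw [Finset.card_sdiff_of_subset hNS, hScard, h2]
      omega
    obtain ⟨u, hu⟩ := Finset.card_eq_one.mp hdiff
    have hsplit : ∑ u ∈ S.toFinset \ N, y u = 0 := by
      have := Finset.sum_sdiff (f := y) hNS
      rw [hNsum, hsumS] at this
      simpa using this
    have huS : u ∈ S := by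
      have : u ∈ S.toFinset \ N := by simp [hu]
      simpa using (Finset.mem_sdiff.mp this).1
    have : y u = 0 := by simpa [hu] using hsplit
    exact hnz u huS this
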